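/- arXiv:1209.2408 — 5 statements merged into one kernel-verified Lean document; each statement's English description precedes it below -/
import Mathlib

section
/- Rank extractor (Gabizon–Raz type): let 1 ≤ s ≤ r ≤ n and let M be an n × r' matrix over a field F of rank s, with r' ≥ s. Let K be a field extension of F and ω ∈ K an element of multiplicative order ≥ n. For α ∈ K define the r × n matrix A_α by (A_α)_{i,j} = (ω^i α)^j. Then the number of α ∈ K for which the first s rows of A_α M have rank < s is at most nr − r(r+1)/2 < nr. -/
open Polynomial Matrix

theorem exists_echelon {F : Type*} [Field F] {n s : ℕ}
    (W : Submodule F (Fin n → F)) (hW : Module.finrank F W = s) :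
    ∃ d : Fin s → Fin n, StrictMono d ∧ ∃ g : Fin s → (Fin n → F),
      ∀ j, g j ∈ W ∧ g j (d j) ≠ 0 ∧ ∀ k, d j < k → g j k = 0 := by
  classical
  set Dset : Set (Fin n) := {e | ∃ v ∈ W, v e ≠ 0 ∧ ∀ k, e < k → v k = 0} with hDset
  have hwit : ∀ e : Fin n, ∃ v : Fin n → F,
      e ∈ Dset → v ∈ W ∧ v e ≠ 0 ∧ ∀ k, e < k → v k = 0 := by
    intro e
    by_cases he : e ∈ Dset
    · obtain ⟨v, hv1, hv2, hv3⟩ := he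
      exact ⟨v, fun _ => ⟨hv1, hv2, hv3⟩⟩
    · exact ⟨0, fun h => absurd h he⟩
  choose w hw using hwit
  set Dfin : Finset (Fin n) := Set.toFinset Dset with hDfin
  set S : Finset (Fin n → F) := Dfin.image w with hS
  have key : ∀ m : ℕ, ∀ v ∈ W, (∀ k : Fin n, m ≤ (k : ℕ) → v k = 0) →
      v ∈ Submodule.span F (S : Set (Fin n → F)) := by
    intro m
    induction m with
    | zero =>
      intro v _ hv
      have : v = 0 := funext fun k => hv k (Nat.zero_le _)
      simp [this]
    | succ m ih =>
      intro v hvW hv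
      by_cases hmn : m < n
      · set km : Fin n := ⟨m, hmn⟩ with hkm
        have hkmv : (km : ℕ) = m := rfl
        by_cases hvm : v km = 0
        · refine ih v hvW ?_
          intro k hk
          rcases Nat.lt_or_ge (k : ℕ) (m+1) with h | h
          · have : k = km := Fin.ext (by omega)
            rwa [this]
          · exact hv k h
        · have hmem : km ∈ Dset := ⟨v, hvW, hvm, fun k hk => hv k (by
            have : (km : ℕ) < (k : ℕ) := hk
            omega)⟩
          obtain ⟨hu1, hu2, hu3⟩ := hw km hmem
          have hmemf : km ∈ Dfin := Set.mem_toFinset.mpr hmem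
          set u := w km with hu
          have huS : u ∈ (S : Set (Fin n → F)) := by
            rw [hS]; exact Finset.mem_image_of_mem w hmemf
          set cc : F := v km / u km with hcc
          have h1 : v - cc • u ∈ W := Submodule.sub_mem W hvW (Submodule.smul_mem W _ hu1)
          have h2 : v - cc • u ∈ Submodule.span F (S : Set (Fin n → F)) := by
            refine ih _ h1 ?_
            intro k hk
            rcases Nat.lt_or_ge (k : ℕ) (m+1) with h | h
            · have hkk : k = km := Fin.ext (by omega)
              have hcu : cc * u km = v km := div_mul_cancel₀ (v km) hu2
              rw [hkk]
              simp only [Pi.sub_apply, Pi.smul_apply, smul_eq_mul, hcu, sub_self]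
            · have hvk : v k = 0 := hv k h
              have huk : u k = 0 := hu3 k (by
                show km < k
                exact Fin.mk_lt_mk.mpr (by omega) |>.trans_le (le_of_eq (Fin.ext rfl)))
              simp [Pi.sub_apply, hvk, huk]
          have hveq : v = (v - cc • u) + cc • u := by ring
          rw [hveq]
          exact Submodule.add_mem _ h2 (Submodule.smul_mem _ _ (Submodule.subset_span huS))
      · exact ih v hvW (fun k hk => absurd hk (by have := k.isLt; omega))
  have hWle : W ≤ Submodule.span F (S : Set (Fin n → F)) := by
    intro v hv
    exact key n v hv (fun k hk => absurd hk (by have := k.isLt; omega))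
  have hsle : s ≤ Dfin.card := by
    have h1 : Module.finrank F W ≤ Module.finrank F (Submodule.span F (S : Set (Fin n → F))) :=
      Submodule.finrank_mono hWle
    have h2 : Module.finrank F (Submodule.span F (S : Set (Fin n → F))) ≤ S.card :=
      finrank_span_finset_le_card S
    have h3 : S.card ≤ Dfin.card := Finset.card_image_le
    omega
  obtain ⟨T, hTsub, hTcard⟩ := Finset.exists_subset_card_eq (s := Dfin) hsle
  set d : Fin s → Fin n := fun j => (T.orderIsoOfFin hTcard j : Fin n) with hd
  have hdmono : StrictMono d := fun a b hab => by
    exact (T.orderIsoOfFin hTcard).strictMono hab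
  refine ⟨d, hdmono, fun j => w (d j), fun j => ?_⟩
  have hdD : d j ∈ Dset := by
    have : d j ∈ Dfin := hTsub (T.orderIsoOfFin hTcard j).2
    exact Set.mem_toFinset.mp this
  exact hw (d j) hdD

theorem strictMono_le_bound {n s : ℕ} (d : Fin s → Fin n) (hd : StrictMono d)
    (j : Fin s) : (d j : ℕ) ≤ n - s + j := by
  have claim : ∀ (k : ℕ) (j : Fin s) (h : (j : ℕ) + k < s),
      (d j : ℕ) + k ≤ (d ⟨(j : ℕ) + k, h⟩ : ℕ) := by
    intro k
    induction k with
    | zero => intro j h; simp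
    | succ k ihk =>
      intro j h
      have h1 : (j : ℕ) + k < s := by omega
      have h2 := ihk j h1
      have h3 : (⟨(j : ℕ) + k, h1⟩ : Fin s) < ⟨(j : ℕ) + (k+1), h⟩ := by
        rw [Fin.mk_lt_mk]; omega
      have h4 := hd h3
      have h5 : (d ⟨(j : ℕ) + k, h1⟩ : ℕ) < (d ⟨(j : ℕ) + (k+1), h⟩ : ℕ) := h4
      omega
  have hj : (j : ℕ) < s := j.isLt
  have h := claim (s - 1 - (j : ℕ)) j (by omega)
  have hlt : (d ⟨(j : ℕ) + (s - 1 - (j : ℕ)), by omega⟩ : ℕ) < n := Fin.is_lt _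
  omega

theorem coeff_prod_sum_of_natDegree_le {K : Type*} [CommRing K] {ι : Type*}
    (t : Finset ι) (f : ι → K[X]) (e : ι → ℕ)
    (h : ∀ i ∈ t, (f i).natDegree ≤ e i) :
    (∏ i ∈ t, f i).coeff (∑ i ∈ t, e i) = ∏ i ∈ t, (f i).coeff (e i) := by
  classical
  induction t using Finset.cons_induction with
  | empty => simp
  | cons a t ha ih =>
    rw [Finset.prod_cons, Finset.sum_cons, Finset.prod_cons]
    rw [Polynomial.coeff_mul_add_eq_of_natDegree_le (h a (Finset.mem_cons_self a t))
      ((Polynomial.natDegree_prod_le t f).trans (Finset.sum_le_sum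
        (fun i hi => h i (Finset.mem_cons_of_mem hi))))]
    rw [ih (fun i hi => h i (Finset.mem_cons_of_mem hi))]

/-- Rank extractor (Gabizon–Raz type): for M an n × r' matrix over F of rank s
(1 ≤ s ≤ r ≤ n, r' ≥ s), K an extension of F, and ω ∈ K whose powers ω^0,…,ω^(n-1) are
distinct (order ≥ n), with A_α the r × n matrix (A_α)_{i,j} = (ω^i α)^j, the set of α ∈ K
for which the first s rows of A_α M have rank < s is finite, of size at most
nr − r(r+1)/2 < nr. -/
theorem rank_extractor {F K : Type*} [Field F] [Field K] [Algebra F K]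
    (n r r' s : ℕ) (hs : 1 ≤ s) (hsr : s ≤ r) (hrn : r ≤ n) (hr' : s ≤ r')
    (M : Matrix (Fin n) (Fin r') F) (hrank : M.rank = s)
    (ω : K) (hω : Set.InjOn (fun k : ℕ => ω ^ k) (Set.Iio n)) :
    {α : K | (((Matrix.of fun (i : Fin r) (j : Fin n) =>
        (ω ^ (i : ℕ) * α) ^ (j : ℕ)) * M.map (algebraMap F K)).submatrix
          (Fin.castLE hsr) id).rank < s}.Finite ∧
    {α : K | (((Matrix.of fun (i : Fin r) (j : Fin n) =>
        (ω ^ (i : ℕ) * α) ^ (j : ℕ)) * M.map (algebraMap F K)).submatrix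
          (Fin.castLE hsr) id).rank < s}.ncard ≤ n * r - r * (r + 1) / 2 ∧
    n * r - r * (r + 1) / 2 < n * r := by
  classical
  set φ := algebraMap F K with hφ
  -- echelon basis of the column space
  obtain ⟨d, hdmono, g, hg⟩ := exists_echelon (LinearMap.range M.mulVecLin) hrank
  choose c hcspec using fun j => (hg j).1
  -- polynomial matrix
  set Q : Matrix (Fin s) (Fin s) K[X] := Matrix.of fun i j =>
    ∑ k : Fin n, Polynomial.monomial (k : ℕ) (φ (g j k) * (ω ^ (i : ℕ)) ^ (k : ℕ)) with hQ
  set P : K[X] := Q.det with hP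
  have hcoeff : ∀ (i j : Fin s) (m : ℕ), (Q i j).coeff m =
      if h : m < n then φ (g j ⟨m, h⟩) * (ω ^ (i : ℕ)) ^ m else 0 := by
    intro i j m
    rw [hQ]
    simp only [Matrix.of_apply, Polynomial.finset_sum_coeff, Polynomial.coeff_monomial]
    by_cases h : m < n
    · rw [dif_pos h, Finset.sum_eq_single (⟨m, h⟩ : Fin n)]
      · simp
      · intro b _ hb
        rw [if_neg (fun hbm => hb (Fin.ext hbm))]
      · intro habs; exact absurd (Finset.mem_univ _) habs
    · rw [dif_neg h, Finset.sum_eq_zero]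
      intro b _
      rw [if_neg (fun hbm : (b : ℕ) = m => h (hbm ▸ b.isLt))]
  have hdeg : ∀ i j : Fin s, (Q i j).natDegree ≤ (d j : ℕ) := by
    intro i j
    rw [Polynomial.natDegree_le_iff_coeff_eq_zero]
    intro m hm
    rw [hcoeff]
    split_ifs with h
    · have : g j ⟨m, h⟩ = 0 := (hg j).2.2 ⟨m, h⟩ (by
        rw [Fin.lt_def]; exact hm)
      rw [this, map_zero, zero_mul]
    · rfl
  have htop : ∀ i j : Fin s, (Q i j).coeff (d j : ℕ) =
      φ (g j (d j)) * (ω ^ ((d j : ℕ))) ^ (i : ℕ) := by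
    intro i j
    rw [hcoeff, dif_pos (d j).isLt]
    rw [← pow_mul, ← pow_mul, mul_comm ((i : ℕ)) ((d j : ℕ))]
  set D : ℕ := ∑ j : Fin s, (d j : ℕ) with hD
  have hPdeg : P.natDegree ≤ D := by
    rw [hP, Matrix.det_apply']
    refine Polynomial.natDegree_sum_le_of_forall_le _ _ ?_
    intro σ _
    refine (Polynomial.natDegree_mul_le).trans ?_
    rw [Polynomial.natDegree_intCast, zero_add]
    exact (Polynomial.natDegree_prod_le _ _).trans (Finset.sum_le_sum fun i _ => hdeg (σ i) i)
  set L : Matrix (Fin s) (Fin s) K := Matrix.of fun i j =>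
    φ (g j (d j)) * (ω ^ ((d j : ℕ))) ^ (i : ℕ) with hL
  have hPcoeff : P.coeff D = L.det := by
    rw [hP, Matrix.det_apply', Polynomial.finset_sum_coeff, Matrix.det_apply']
    refine Finset.sum_congr rfl ?_
    intro σ _
    rw [show ((Equiv.Perm.sign σ : ℤ) : K[X]) = Polynomial.C ((Equiv.Perm.sign σ : ℤ) : K) from
      (Polynomial.C_eq_intCast _).symm]
    rw [Polynomial.coeff_C_mul, hD,
      coeff_prod_sum_of_natDegree_le _ _ _ (fun i _ => hdeg (σ i) i)]
    congr 1
    exact Finset.prod_congr rfl fun i _ => htop (σ i) i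
  have hLdet : L.det ≠ 0 := by
    have hinj : Function.Injective (fun j : Fin s => ω ^ ((d j : ℕ))) := by
      intro j1 j2 h12
      have := hω (Set.mem_Iio.mpr (d j1).isLt) (Set.mem_Iio.mpr (d j2).isLt) h12
      exact hdmono.injective (Fin.ext this)
    have hvdm : (Matrix.vandermonde fun j : Fin s => ω ^ ((d j : ℕ))).det ≠ 0 :=
      Matrix.det_vandermonde_ne_zero_iff.mpr hinj
    have heq : L = Matrix.of fun i j => φ (g j (d j)) *
        (Matrix.vandermonde fun j : Fin s => ω ^ ((d j : ℕ)))ᵀ i j := by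
      ext i j
      simp [hL, Matrix.vandermonde, Matrix.transpose_apply]
    rw [heq, Matrix.det_mul_row, Matrix.det_transpose]
    refine mul_ne_zero ?_ hvdm
    refine Finset.prod_ne_zero_iff.mpr fun j _ => ?_
    exact fun h0 => (hg j).2.1 ((algebraMap F K).injective (by rwa [map_zero]))
  have hPne : P ≠ 0 := by
    intro h0
    rw [h0, Polynomial.coeff_zero] at hPcoeff
    exact hLdet hPcoeff.symm
  -- bad α are roots of P
  have hroot : ∀ α : K, (((Matrix.of fun (i : Fin r) (j : Fin n) =>
      (ω ^ (i : ℕ) * α) ^ (j : ℕ)) * M.map (algebraMap F K)).submatrix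
        (Fin.castLE hsr) id).rank < s → P.IsRoot α := by
    intro α hα
    set Bα := (((Matrix.of fun (i : Fin r) (j : Fin n) =>
      (ω ^ (i : ℕ) * α) ^ (j : ℕ)) * M.map (algebraMap F K)).submatrix
        (Fin.castLE hsr) id) with hBα
    set Cm : Matrix (Fin r') (Fin s) K := Matrix.of fun t j => φ (c j t) with hCm
    have hE : Q.map (Polynomial.eval α) = Bα * Cm := by
      ext i j
      rw [Matrix.map_apply, Matrix.mul_apply, hQ, hBα]
      simp only [Matrix.of_apply, Matrix.submatrix_apply, Matrix.mul_apply, id_eq,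
        Matrix.map_apply, Fin.coe_castLE, hCm]
      rw [Polynomial.eval_finset_sum]
      simp only [Polynomial.eval_monomial]
      have hswap : ∀ k : Fin n, φ (g j k) * (ω ^ (i : ℕ)) ^ (k : ℕ) * α ^ (k : ℕ)
          = ∑ t : Fin r', (ω ^ (i : ℕ) * α) ^ (k : ℕ) * φ (M k t) * φ (c j t) := by
        intro k
        have : g j k = ∑ t : Fin r', M k t * c j t := by
          rw [← hcspec j]; rfl
        rw [this, map_sum, Finset.sum_mul, Finset.sum_mul]
        refine Finset.sum_congr rfl fun t _ => ?_
        rw [_root_.map_mul, mul_pow]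
        ring
      rw [Finset.sum_congr rfl fun k _ => hswap k, Finset.sum_comm]
      refine Finset.sum_congr rfl fun t _ => ?_
      rw [Finset.sum_mul]
    have hdet0 : P.eval α = 0 := by
      have hmapdet : P.eval α = (Q.map (Polynomial.eval α)).det := by
        rw [hP]
        exact RingHom.map_det (Polynomial.evalRingHom α) Q
      rw [hmapdet, hE]
      by_contra hne
      have hunit : IsUnit (Bα * Cm).det := isUnit_iff_ne_zero.mpr hne
      have hrk := Matrix.rank_of_isUnit _ ((Matrix.isUnit_iff_isUnit_det _).mpr hunit)
      rw [Fintype.card_fin] at hrk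
      have hle := Matrix.rank_mul_le_left Bα Cm
      omega
    exact hdet0
  -- counting
  set bad := {α : K | (((Matrix.of fun (i : Fin r) (j : Fin n) =>
      (ω ^ (i : ℕ) * α) ^ (j : ℕ)) * M.map (algebraMap F K)).submatrix
        (Fin.castLE hsr) id).rank < s} with hbad
  have hsub : bad ⊆ {α : K | P.IsRoot α} := fun α hα => hroot α hα
  have hfinroots : {α : K | P.IsRoot α}.Finite := Polynomial.finite_setOf_isRoot hPne
  have hfin : bad.Finite := hfinroots.subset hsub
  have hcard1 : bad.ncard ≤ {α : K | P.IsRoot α}.ncard := Set.ncard_le_ncard hsub hfinroots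
  have hsetroots : {α : K | P.IsRoot α} = ↑P.roots.toFinset := by
    ext β
    simp [Polynomial.mem_roots, hPne]
  have hcard2 : {α : K | P.IsRoot α}.ncard ≤ P.natDegree := by
    rw [hsetroots, Set.ncard_coe_finset]
    exact (Multiset.toFinset_card_le _).trans (Polynomial.card_roots' P)
  -- arithmetic
  have hsn : s ≤ n := hsr.trans hrn
  have hDle : D ≤ n * r - r * (r + 1) / 2 := by
    set a := r * (r + 1) / 2 with ha
    have h2a : a * 2 = r * (r + 1) :=
      Nat.div_mul_cancel (Nat.even_mul_succ_self r).two_dvd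
    set b := ∑ i ∈ Finset.range s, i with hb
    have h2b : b * 2 = s * (s - 1) := Finset.sum_range_id_mul_two s
    have hD1 : D ≤ s * (n - s) + b := by
      rw [hD]
      calc ∑ j : Fin s, (d j : ℕ) ≤ ∑ j : Fin s, ((n - s) + (j : ℕ)) :=
            Finset.sum_le_sum fun j _ => strictMono_le_bound d hdmono j
        _ = s * (n - s) + b := by
            rw [Finset.sum_add_distrib, Finset.sum_const, Finset.card_univ,
              Fintype.card_fin, smul_eq_mul, hb, Fin.sum_univ_eq_sum_range (fun i => i) s]
    obtain ⟨t, hnt⟩ : ∃ t, n = s + t := ⟨n - s, by omega⟩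
    obtain ⟨v, hrv⟩ : ∃ v, r = s + v := ⟨r - s, by omega⟩
    obtain ⟨u, hsu⟩ : ∃ u, s = u + 1 := ⟨s - 1, by omega⟩
    have htv : v ≤ t := by omega
    rw [hrv] at h2a
    have h2b' : b * 2 = (u + 1) * u := by rw [h2b, hsu]; simp
    have hkey : s * (n - s) + b + a ≤ n * r := by
      have hns : n - s = t := by omega
      rw [hns, hnt, hrv]
      have hv2t : v * (v + 1) ≤ v * (2 * t) := by
        rcases Nat.eq_zero_or_pos v with hv0 | hv1
        · simp [hv0]
        · exact Nat.mul_le_mul_left v (by omega)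
      have hdbl : (s * t + b + a) * 2 ≤ ((s + t) * (s + v)) * 2 := by nlinarith [h2a, h2b', hv2t, hsu]
      exact Nat.le_of_mul_le_mul_right hdbl (by norm_num)
    exact Nat.le_sub_of_add_le (le_trans (Nat.add_le_add_right hD1 a) hkey)
  have hnra : n * r - r * (r + 1) / 2 < n * r := by
    set a := r * (r + 1) / 2 with ha
    have h2a : a * 2 = r * (r + 1) :=
      Nat.div_mul_cancel (Nat.even_mul_succ_self r).two_dvd
    have hr1 : 1 ≤ r := hs.trans hsr
    have hn1 : 1 ≤ n := hr1.trans hrn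
    have e1 : r * (r + 1) = r * r + r := by ring
    have e2 : r * r ≤ n * r := Nat.mul_le_mul_right r hrn
    have e3 : r ≤ n * r := le_trans (by omega : r ≤ 1 * r) (Nat.mul_le_mul_right r hn1)
    have e4 : 1 ≤ r * r := le_trans (by omega : 1 ≤ 1 * 1) (Nat.mul_le_mul hr1 hr1)
    have h1le : 1 ≤ a := by linarith
    have haub : a ≤ n * r := by linarith
    have hpos : 0 < n * r := by linarith
    exact Nat.sub_lt hpos h1le
  refine ⟨hfin, ?_, hnra⟩
  calc bad.ncard ≤ P.natDegree := le_trans hcard1 hcard2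
    _ ≤ D := hPdeg
    _ ≤ n * r - r * (r + 1) / 2 := hDle
end

section
/- Over a field of characteristic zero (formally, over Q), for a vector of polynomials P_j(x⃗,c⃗) = Σ_m g_{j,m}(x_m, c⃗) (each g_{j,m} a polynomial in the single variable x_m and the parameters c⃗) and an exponent vector e⃗, one has (1/e⃗!) · ∏_j P_j^{e_j} = coeff_{z⃗^{e⃗}} ( ∏_m ∏_j trexp_{e_j}( g_{j,m}(x_m, c⃗) · z_j ) ), where trexp_e(x) = Σ_{ℓ=0}^{e} x^ℓ/ℓ! is the truncated exponential and the coefficient is taken of the monomial z⃗^{e⃗} = ∏_j z_j^{e_j} viewing the expression as a polynomial in z⃗ with coefficients in Q[x⃗,c⃗]. -/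
open Finset

/-- Coefficient of a product of truncated exponentials (single variable). -/
lemma lemA {R : Type*} [CommRing R] [Algebra ℚ R] {ι : Type*} (s : Finset ι)
    (a : ι → R) (e : ℕ) :
    ∀ d ≤ e, (∏ m ∈ s, ∑ ℓ ∈ Finset.range (e + 1),
        Polynomial.C ((ℓ.factorial : ℚ)⁻¹ • a m ^ ℓ) * Polynomial.X ^ ℓ).coeff d
      = (d.factorial : ℚ)⁻¹ • (∑ m ∈ s, a m) ^ d := by
  classical
  induction s using Finset.induction with
  | empty =>
    intro d _
    cases d with
    | zero => simp
    | succ d => simp [Polynomial.coeff_one, zero_pow]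
  | insert _ _ hm ih =>
    rename_i m s
    intro d hd
    rw [Finset.prod_insert hm, Polynomial.coeff_mul,
      Finset.Nat.sum_antidiagonal_eq_sum_range_succ_mk]
    have hco : ∀ i ≤ e, (∑ ℓ ∈ Finset.range (e + 1),
        Polynomial.C ((ℓ.factorial : ℚ)⁻¹ • a m ^ ℓ) * Polynomial.X ^ ℓ).coeff i
        = (i.factorial : ℚ)⁻¹ • a m ^ i := by
      intro i hi
      simp_rw [Polynomial.C_mul_X_pow_eq_monomial, Polynomial.finset_sum_coeff,
        Polynomial.coeff_monomial]
      rw [Finset.sum_ite_eq' (Finset.range (e + 1))]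
      simp [Nat.lt_succ_of_le hi]
    have key : ∀ i ∈ Finset.range (d + 1),
        (∑ ℓ ∈ Finset.range (e + 1),
          Polynomial.C ((ℓ.factorial : ℚ)⁻¹ • a m ^ ℓ) * Polynomial.X ^ ℓ).coeff i *
          (∏ m' ∈ s, ∑ ℓ ∈ Finset.range (e + 1),
            Polynomial.C ((ℓ.factorial : ℚ)⁻¹ • a m' ^ ℓ) * Polynomial.X ^ ℓ).coeff (d - i)
        = ((i.factorial : ℚ)⁻¹ * ((d - i).factorial : ℚ)⁻¹) •
            (a m ^ i * (∑ m' ∈ s, a m') ^ (d - i)) := by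
      intro i hi
      rw [Finset.mem_range, Nat.lt_succ_iff] at hi
      rw [hco i (hi.trans hd), ih (d - i) ((Nat.sub_le d i).trans hd),
        smul_mul_smul_comm]
    rw [Finset.sum_congr rfl key, Finset.sum_insert hm, add_pow, Finset.smul_sum]
    refine Finset.sum_congr rfl ?_
    intro i hi
    rw [Finset.mem_range, Nat.lt_succ_iff] at hi
    have h1 : a m ^ i * (∑ m' ∈ s, a m') ^ (d - i) * (d.choose i : R)
        = (d.choose i : ℚ) • (a m ^ i * (∑ m' ∈ s, a m') ^ (d - i)) := by
      rw [Algebra.smul_def, map_natCast]; ring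
    rw [h1, smul_smul]
    congr 1
    rw [Nat.cast_choose ℚ hi]
    have h2 : (i.factorial : ℚ) ≠ 0 := Nat.cast_ne_zero.mpr i.factorial_ne_zero
    have h3 : ((d - i).factorial : ℚ) ≠ 0 := Nat.cast_ne_zero.mpr (d - i).factorial_ne_zero
    have h4 : (d.factorial : ℚ) ≠ 0 := Nat.cast_ne_zero.mpr d.factorial_ne_zero
    field_simp

lemma prod_monomial {R : Type*} [CommSemiring R] {σ ι : Type*} (s : Finset ι)
    (d : ι → σ →₀ ℕ) (c : ι → R) :
    ∏ i ∈ s, MvPolynomial.monomial (d i) (c i)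
      = MvPolynomial.monomial (∑ i ∈ s, d i) (∏ i ∈ s, c i) := by
  classical
  induction s using Finset.induction with
  | empty => simp
  | insert _ _ hm ih =>
    rename_i m s
    rw [Finset.prod_insert hm, Finset.prod_insert hm, Finset.sum_insert hm, ih,
      MvPolynomial.monomial_mul]

lemma lemB {R : Type*} [CommSemiring R] {k : ℕ} (c : Fin k → ℕ → R) (N e : Fin k → ℕ)
    (he : ∀ j, e j < N j) :
    MvPolynomial.coeff (Finsupp.equivFunOnFinite.symm e)
      (∏ j, ∑ ℓ ∈ Finset.range (N j), MvPolynomial.monomial (Finsupp.single j ℓ) (c j ℓ))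
    = ∏ j, c j (e j) := by
  classical
  rw [Finset.prod_univ_sum]
  have hmono : ∀ p : Fin k → ℕ,
      (∏ j, MvPolynomial.monomial (Finsupp.single j (p j)) (c j (p j)))
        = MvPolynomial.monomial (Finsupp.equivFunOnFinite.symm p) (∏ j, c j (p j)) := by
    intro p
    rw [prod_monomial]
    have hD : (∑ j, Finsupp.single j (p j)) = Finsupp.equivFunOnFinite.symm p := by
      ext i
      rw [Finsupp.finset_sum_apply]
      simp [Finsupp.single_apply]
    rw [hD]
  simp_rw [hmono]
  rw [MvPolynomial.coeff_sum]
  simp_rw [MvPolynomial.coeff_monomial]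
  rw [Finset.sum_eq_single_of_mem e]
  · simp
  · simp only [Fintype.mem_piFinset, Finset.mem_range]
    exact fun j => he j
  · intro p _ hp
    rw [if_neg]
    exact fun h => hp (Finsupp.equivFunOnFinite.symm.injective h)

/-- Duality over ℚ: for polynomials P_j(x⃗,c⃗) = Σ_m g_{j,m}(x_m,c⃗), where each g_{j,m}
involves only the variable x_m and the parameters c⃗, and an exponent vector e⃗,
(1/e⃗!) ∏_j P_j^{e_j} is the coefficient of z⃗^{e⃗} in
∏_m ∏_j trexp_{e_j}(g_{j,m}(x_m,c⃗)·z_j), where trexp_e(x) = Σ_{ℓ=0}^e x^ℓ/ℓ!. -/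
theorem duality_over_Q {n k : ℕ} {γ : Type*}
    (g : Fin k → Fin n → MvPolynomial (Fin n ⊕ γ) ℚ)
    (hg : ∀ j m, g j m ∈ MvPolynomial.supported ℚ
      ({Sum.inl m} ∪ Set.range (Sum.inr : γ → Fin n ⊕ γ)))
    (e : Fin k → ℕ) :
    (∏ j, ((e j).factorial : ℚ))⁻¹ • ∏ j, (∑ m, g j m) ^ (e j) =
      MvPolynomial.coeff (Finsupp.equivFunOnFinite.symm e)
        (∏ m : Fin n, ∏ j : Fin k,
          ∑ ℓ ∈ Finset.range (e j + 1),
            MvPolynomial.C (((ℓ.factorial : ℚ))⁻¹ • (g j m) ^ ℓ) *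
              (MvPolynomial.X j : MvPolynomial (Fin k) (MvPolynomial (Fin n ⊕ γ) ℚ)) ^ ℓ) := by
  classical
  let R := MvPolynomial (Fin n ⊕ γ) ℚ
  -- the single-variable polynomial for each j
  set f : Fin k → Polynomial R := fun j => ∏ m : Fin n, ∑ ℓ ∈ Finset.range (e j + 1),
    Polynomial.C ((ℓ.factorial : ℚ)⁻¹ • g j m ^ ℓ) * Polynomial.X ^ ℓ with hf
  rw [Finset.prod_comm]
  have hstep : ∀ j : Fin k,
      (∏ m : Fin n, ∑ ℓ ∈ Finset.range (e j + 1),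
          MvPolynomial.C (((ℓ.factorial : ℚ))⁻¹ • (g j m) ^ ℓ) *
            (MvPolynomial.X j : MvPolynomial (Fin k) R) ^ ℓ)
        = Polynomial.aeval (MvPolynomial.X j : MvPolynomial (Fin k) R) (f j) := by
    intro j
    rw [hf, map_prod]
    refine Finset.prod_congr rfl fun m _ => ?_
    rw [map_sum]
    refine Finset.sum_congr rfl fun ℓ _ => ?_
    rw [map_mul, map_pow, Polynomial.aeval_X, Polynomial.aeval_C,
      MvPolynomial.algebraMap_eq]
  rw [Finset.prod_congr rfl fun j _ => hstep j]
  set N : Fin k → ℕ := fun j => max (f j).natDegree (e j) + 1 with hN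
  have hfN : ∀ j, f j = ∑ ℓ ∈ Finset.range (N j), Polynomial.monomial ℓ ((f j).coeff ℓ) :=
    fun j => Polynomial.as_sum_range' (f j) (N j) (Nat.lt_succ_of_le (le_max_left _ _))
  have haev : ∀ j, Polynomial.aeval (MvPolynomial.X j : MvPolynomial (Fin k) R) (f j)
      = ∑ ℓ ∈ Finset.range (N j),
          MvPolynomial.monomial (Finsupp.single j ℓ) ((f j).coeff ℓ) := by
    intro j
    conv_lhs => rw [hfN j]
    rw [map_sum]
    refine Finset.sum_congr rfl fun ℓ _ => ?_
    rw [Polynomial.aeval_monomial, MvPolynomial.algebraMap_eq,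
      MvPolynomial.C_mul_X_pow_eq_monomial]
  simp_rw [haev]
  rw [lemB _ N e (fun j => Nat.lt_succ_of_le (le_max_right _ _))]
  have hcoef : ∀ j, (f j).coeff (e j) = ((e j).factorial : ℚ)⁻¹ • (∑ m, g j m) ^ (e j) :=
    fun j => lemA Finset.univ (g j) (e j) (e j) le_rfl
  simp_rw [hcoef, MvPolynomial.smul_eq_C_mul]
  rw [Finset.prod_mul_distrib, ← map_prod, ← Finset.prod_inv_distrib]
end

section
/- Staircase matrix evaluation extracts graded parts: let F be a field, n ≥ 1, D ≥ 0. For i ∈ {0,…,n-1} define the (D+1)×(D+1) matrix X_i over the polynomial ring F[x_{i,j} : j ∈ {1,…,D}] by (X_i)_{k,ℓ} = x_{i,ℓ} if ℓ = k+1 and 0 otherwise. Let φ be the unique F-linear map on noncommutative polynomials sending the word x_{i_1} x_{i_2} ⋯ x_{i_d} to x_{i_1,1} x_{i_2,2} ⋯ x_{i_d,d} (and 1 to 1). Then for every noncommutative polynomial f ∈ F⟨x_0,…,x_{n-1}⟩ and every 0 ≤ ℓ ≤ D, the (0,ℓ) entry of f(X_0,…,X_{n-1}) equals φ(H_ℓ(f)),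 where H_ℓ(f) is the homogeneous degree-ℓ part of f. -/
/-- The staircase matrix X_i: the (D+1)×(D+1) matrix over F[x_{i,j}] with
(X_i)_{k,k+1} = x_{i,k+1} and zeros elsewhere. Variables are indexed by pairs (i,j). -/
noncomputable def staircaseMatrix (F : Type*) [Field F] (n D : ℕ) (i : Fin n) :
    Matrix (Fin (D + 1)) (Fin (D + 1)) (MvPolynomial (Fin n × ℕ) F) :=
  Matrix.of fun k l => if (l : ℕ) = (k : ℕ) + 1 then MvPolynomial.X (i, (l : ℕ)) else 0

/-- Evaluation of a noncommutative polynomial (an element of the monoid algebra of the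
free monoid on n generators) at the staircase matrices, substituting X_i for x_i and
a ↦ a·I for scalars. -/
noncomputable def staircaseEval (F : Type*) [Field F] (n D : ℕ)
    (f : MonoidAlgebra F (FreeMonoid (Fin n))) :
    Matrix (Fin (D + 1)) (Fin (D + 1)) (MvPolynomial (Fin n × ℕ) F) :=
  MonoidAlgebra.lift F
    (Matrix (Fin (D + 1)) (Fin (D + 1)) (MvPolynomial (Fin n × ℕ) F)) (FreeMonoid (Fin n))
    (FreeMonoid.lift (staircaseMatrix F n D)) f

lemma prod_staircase_entry {F : Type*} [Field F] (n D : ℕ) (L : List (Fin n))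
    (k l : Fin (D + 1)) :
    (L.map (staircaseMatrix F n D)).prod k l =
      if (l : ℕ) = (k : ℕ) + L.length then
        ∏ t : Fin L.length, MvPolynomial.X (L.get t, (k : ℕ) + t + 1) else 0 := by
  induction L generalizing k with
  | nil =>
    simp [Matrix.one_apply, Fin.ext_iff, eq_comm]
  | cons a L ih =>
    rw [List.map_cons, List.prod_cons, Matrix.mul_apply]
    by_cases h : (k : ℕ) + 1 ≤ D
    · have hm : ((⟨(k : ℕ) + 1, by omega⟩ : Fin (D + 1)) : ℕ) = (k : ℕ) + 1 := rfl
      rw [Finset.sum_eq_single (⟨(k : ℕ) + 1, by omega⟩ : Fin (D + 1))]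
      · rw [ih]
        simp only [staircaseMatrix, Matrix.of_apply, hm, if_pos rfl]
        have hc : ((l : ℕ) = (k : ℕ) + 1 + L.length) ↔ ((l : ℕ) = (k : ℕ) + (a :: L).length) := by
          simp [List.length_cons]; omega
        by_cases hl : (l : ℕ) = (k : ℕ) + 1 + L.length
        · rw [if_pos hl, if_pos (hc.mp hl), if_true]
          simp only [List.length_cons]
          rw [Fin.prod_univ_succ]
          congr 1
          apply Finset.prod_congr rfl
          intro t _
          have : (k : ℕ) + 1 + (t : ℕ) + 1 = (k : ℕ) + ((t : ℕ) + 1) + 1 := by omega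
          rw [this]
          rfl
        · rw [if_neg hl, if_neg (fun h' => hl (hc.mpr h')), mul_zero]
      · intro m _ hm'
        have : (m : ℕ) ≠ (k : ℕ) + 1 := by
          intro h'
          exact hm' (by ext; simp [h'])
        simp [staircaseMatrix, this]
      · simp
    · have hk : (k : ℕ) = D := by omega
      have h1 : ∀ m : Fin (D + 1), staircaseMatrix F n D a k m * (L.map (staircaseMatrix F n D)).prod m l = 0 := by
        intro m
        have : (m : ℕ) ≠ (k : ℕ) + 1 := by omega
        simp [staircaseMatrix, this]
      rw [Finset.sum_congr rfl (fun m _ => h1 m), Finset.sum_const, smul_zero]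
      have : (l : ℕ) ≠ (k : ℕ) + (a :: L).length := by
        have := l.isLt; simp [List.length_cons]; omega
      rw [if_neg this]

/-- Staircase evaluation extracts graded parts: for any noncommutative polynomial f and
0 ≤ ℓ ≤ D, the (0,ℓ) entry of f(X_0,…,X_{n-1}) is φ(H_ℓ(f)), where H_ℓ(f) is the
homogeneous degree-ℓ part of f and φ sends the word x_{i_1}⋯x_{i_d} to
x_{i_1,1}⋯x_{i_d,d}. -/
theorem staircase_entry_eq_graded_part {F : Type*} [Field F] (n D : ℕ) (hn : 1 ≤ n)
    (f : MonoidAlgebra F (FreeMonoid (Fin n))) (ℓ : ℕ) (hℓ : ℓ ≤ D) :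
    staircaseEval F n D f 0 ⟨ℓ, Nat.lt_succ_of_le hℓ⟩ =
      f.coeff.sum fun w c =>
        if w.toList.length = ℓ then
          c • ∏ t : Fin w.toList.length, MvPolynomial.X (w.toList.get t, (t : ℕ) + 1)
        else 0 := by
  rw [staircaseEval, MonoidAlgebra.lift_apply, Finsupp.sum, Finsupp.sum,
    Matrix.sum_apply]
  apply Finset.sum_congr rfl
  intro w _
  rw [Matrix.smul_apply, FreeMonoid.lift_apply, prod_staircase_entry]
  simp only [Fin.val_zero, zero_add]
  by_cases hw : w.toList.length = ℓ
  · rw [if_pos hw.symm, if_pos hw]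
  · rw [if_neg (fun h => hw h.symm), if_neg hw, smul_zero]
end

section
/- Nonzeroness transfer for the staircase substitution: with the matrices X_i and map φ as above, for any noncommutative polynomial f ∈ F⟨x_0,…,x_{n-1}⟩ of degree ≤ D, f = 0 if and only if f(X_0,…,X_{n-1}) = 0 (as a matrix over the commutative polynomial ring F[x_{i,j}]). Moreover each entry (f(X⃗))_{0,ℓ} is a set-multilinear polynomial with respect to the partition of the variables into the sets {x_{i,j} : i} for each j. -/
namespace StaircaseAux

/-- The exponent vector of the word `w` substituted starting at position `k`. -/
noncomputable def wm {n : ℕ} : ℕ → List (Fin n) → ((Fin n × ℕ) →₀ ℕ)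
  | _, [] => 0
  | k, a :: t => Finsupp.single (a, k + 1) 1 + wm (k + 1) t

@[simp] lemma wm_nil {n : ℕ} (k : ℕ) : wm k ([] : List (Fin n)) = 0 := rfl

@[simp] lemma wm_cons {n : ℕ} (k : ℕ) (a : Fin n) (t : List (Fin n)) :
    wm k (a :: t) = Finsupp.single (a, k + 1) 1 + wm (k + 1) t := rfl

lemma wm_apply_le {n : ℕ} (w : List (Fin n)) (k : ℕ) (i : Fin n) (j : ℕ) (hj : j ≤ k) :
    wm k w (i, j) = 0 := by
  induction w generalizing k with
  | nil => simp
  | cons a t ih =>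
    simp only [wm_cons, Finsupp.add_apply, Finsupp.single_apply, ih (k + 1) (by omega)]
    rw [if_neg (by simp; omega)]

lemma wm_inj {n : ℕ} (w w' : List (Fin n)) (k : ℕ) (hl : w.length = w'.length)
    (h : wm k w = wm k w') : w = w' := by
  induction w generalizing w' k with
  | nil => cases w' <;> simp_all
  | cons a t ih =>
    cases w' with
    | nil => simp at hl
    | cons a' t' =>
      have hhead : a = a' := by
        have h1 : wm k (a :: t) (a, k + 1) = 1 := by
          simp [Finsupp.single_apply, wm_apply_le t (k + 1) a (k + 1) le_rfl]
        have h2 : wm k (a' :: t') (a, k + 1) = if a' = a then 1 else 0 := by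
          simp [Finsupp.single_apply, Prod.ext_iff,
            wm_apply_le t' (k + 1) a (k + 1) le_rfl]
        rw [h, h2] at h1
        by_contra hne
        rw [if_neg (fun e => hne e.symm)] at h1
        omega
      subst hhead
      have htail : wm (k + 1) t = wm (k + 1) t' := by
        ext p
        have := DFunLike.congr_fun h p
        simp only [wm_cons, Finsupp.add_apply] at this
        omega
      simp only [List.length_cons, Nat.add_right_cancel_iff] at hl
      rw [ih t' (k + 1) hl htail]

lemma sum_wm {n : ℕ} (w : List (Fin n)) (k j : ℕ) :
    (∑ i : Fin n, wm k w (i, j)) = if k + 1 ≤ j ∧ j ≤ k + w.length then 1 else 0 := by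
  induction w generalizing k with
  | nil => simp only [wm_nil, Finsupp.coe_zero, Pi.zero_apply, Finset.sum_const_zero,
      List.length_nil]; rw [if_neg (by omega)]
  | cons a t ih =>
    simp only [wm_cons, Finsupp.add_apply, Finset.sum_add_distrib, ih (k + 1)]
    have hs : (∑ i : Fin n, (Finsupp.single (a, k + 1) 1 : (Fin n × ℕ) →₀ ℕ) (i, j))
        = if j = k + 1 then 1 else 0 := by
      rw [Finset.sum_eq_single a]
      · simp [Finsupp.single_apply, Prod.ext_iff, eq_comm]
      · intro b _ hb
        simp [Finsupp.single_apply, Prod.ext_iff, hb.symm]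
      · simp
    rw [hs]
    simp only [List.length_cons]
    by_cases hj : j = k + 1
    · rw [if_pos hj, if_neg (by omega), if_pos (by omega)]
    · rw [if_neg hj]
      by_cases h2 : k + 1 + 1 ≤ j ∧ j ≤ k + 1 + t.length
      · rw [if_pos h2, if_pos (by omega)]
      · rw [if_neg h2, if_neg (by omega)]

variable {F : Type*} [Field F] {n D : ℕ}

lemma prod_entry (w : List (Fin n)) (k l : Fin (D + 1)) :
    ((w.map (staircaseMatrix F n D)).prod) k l =
      if (l : ℕ) = (k : ℕ) + w.length
      then MvPolynomial.monomial (wm (k : ℕ) w) 1 else 0 := by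
  induction w generalizing k with
  | nil =>
    simp only [List.map_nil, List.prod_nil, List.length_nil, Nat.add_zero]
    by_cases h : k = l
    · subst h; simp [Matrix.one_apply]
    · rw [Matrix.one_apply_ne' (Ne.symm h), if_neg (fun hc => h (Fin.ext (by omega)))]
  | cons a t ih =>
    simp only [List.map_cons, List.prod_cons, Matrix.mul_apply, staircaseMatrix,
      Matrix.of_apply, List.length_cons]
    by_cases hk : (k : ℕ) + 1 ≤ D
    · rw [Finset.sum_eq_single (⟨(k : ℕ) + 1, by omega⟩ : Fin (D + 1))]
      · rw [if_pos rfl, ih]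
        simp only [Fin.val_mk]
        by_cases hl : (l : ℕ) = (k : ℕ) + (t.length + 1)
        · rw [if_pos (by omega), if_pos (by omega), MvPolynomial.X,
            MvPolynomial.monomial_mul, one_mul, wm_cons]
        · rw [if_neg (by omega), if_neg (by omega), mul_zero]
      · intro b _ hb
        rw [if_neg (fun hc => hb (Fin.ext (by simpa using hc))), zero_mul]
      · simp
    · have h0 : ∀ b : Fin (D + 1), (if (b : ℕ) = (k : ℕ) + 1
          then (MvPolynomial.X ((a, (b : ℕ))) : MvPolynomial (Fin n × ℕ) F) else 0)
          * (t.map (staircaseMatrix F n D)).prod b l = 0 := by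
        intro b
        rw [if_neg (by omega), zero_mul]
      rw [Finset.sum_congr rfl (fun b _ => h0 b), Finset.sum_const_zero,
        if_neg (by omega)]

lemma eval_entry (f : MonoidAlgebra F (FreeMonoid (Fin n))) (k l : Fin (D + 1)) :
    staircaseEval F n D f k l =
      ∑ w ∈ f.coeff.support, if (l : ℕ) = (k : ℕ) + w.toList.length
        then f.coeff w • (MvPolynomial.monomial (wm (k : ℕ) w.toList) 1 :
          MvPolynomial (Fin n × ℕ) F) else 0 := by
  rw [staircaseEval, MonoidAlgebra.lift_apply, Finsupp.sum]
  rw [Matrix.sum_apply]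
  refine Finset.sum_congr rfl fun w _ => ?_
  rw [Matrix.smul_apply, FreeMonoid.lift_apply, prod_entry]
  split <;> simp

lemma eval_entry_zero (f : MonoidAlgebra F (FreeMonoid (Fin n))) (l : Fin (D + 1)) :
    staircaseEval F n D f 0 l =
      ∑ w ∈ f.coeff.support, if (l : ℕ) = w.toList.length
        then f.coeff w • (MvPolynomial.monomial (wm 0 w.toList) 1 :
          MvPolynomial (Fin n × ℕ) F) else 0 := by
  rw [eval_entry]
  refine Finset.sum_congr rfl fun w _ => ?_
  norm_num

end StaircaseAux

open StaircaseAux in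
/-- Nonzeroness transfer for the staircase substitution: for a noncommutative polynomial
f of degree ≤ D, f = 0 iff f(X⃗) = 0; moreover each entry (f(X⃗))_{0,ℓ} is set-multilinear:
every monomial in its support uses exactly one variable x_{•,j} for each 1 ≤ j ≤ ℓ and no
variable x_{•,j} for other j. -/
theorem staircase_nonzeroness_and_setMultilinear {F : Type*} [Field F] (n D : ℕ)
    (hn : 1 ≤ n) (f : MonoidAlgebra F (FreeMonoid (Fin n)))
    (hdeg : ∀ w ∈ f.coeff.support, w.toList.length ≤ D) :
    (f = 0 ↔ staircaseEval F n D f = 0) ∧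
    ∀ ℓ : Fin (D + 1), ∀ m ∈ (staircaseEval F n D f 0 ℓ).support, ∀ j : ℕ,
      ((1 ≤ j ∧ j ≤ (ℓ : ℕ)) → (∑ i : Fin n, m (i, j)) = 1) ∧
      (¬(1 ≤ j ∧ j ≤ (ℓ : ℕ)) → (∑ i : Fin n, m (i, j)) = 0) := by
  constructor
  · constructor
    · rintro rfl
      simp [staircaseEval]
    · intro h
      by_contra hf
      obtain ⟨w0, hw0⟩ := Finsupp.ne_iff.mp (fun hc => hf (MonoidAlgebra.coeff_eq_zero.mp hc))
      simp only [Finsupp.coe_zero, Pi.zero_apply] at hw0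
      have hw0s : w0 ∈ f.coeff.support := Finsupp.mem_support_iff.mpr hw0
      have hlen : w0.toList.length ≤ D := hdeg w0 hw0s
      set ℓ : Fin (D + 1) := ⟨w0.toList.length, by omega⟩ with hℓ
      have hent : staircaseEval F n D f 0 ℓ = 0 := by rw [h]; rfl
      have hc := congrArg (MvPolynomial.coeff (wm 0 w0.toList)) hent
      rw [eval_entry_zero, MvPolynomial.coeff_sum] at hc
      rw [Finset.sum_eq_single w0] at hc
      · rw [if_pos rfl, MvPolynomial.coeff_smul,
          MvPolynomial.coeff_monomial, if_pos rfl] at hc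
        simp at hc
        exact hw0 hc
      · intro w hws hne
        by_cases hl : (ℓ : ℕ) = w.toList.length
        · rw [if_pos hl, MvPolynomial.coeff_smul, MvPolynomial.coeff_monomial,
            if_neg, smul_zero]
          intro hceq
          exact hne (FreeMonoid.toList.injective
            (wm_inj w.toList w0.toList 0 (by rw [← hl]) hceq))
        · rw [if_neg hl]; simp
      · intro hns; exact absurd hw0s hns
  · intro ℓ m hm j
    rw [MvPolynomial.mem_support_iff, eval_entry_zero, MvPolynomial.coeff_sum] at hm
    obtain ⟨w, hws, hw⟩ := Finset.exists_ne_zero_of_sum_ne_zero hm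
    by_cases hl : (ℓ : ℕ) = w.toList.length
    · rw [if_pos hl, MvPolynomial.coeff_smul, MvPolynomial.coeff_monomial] at hw
      have hmw : wm 0 w.toList = m := by
        by_contra hne
        rw [if_neg hne, smul_zero] at hw
        exact hw rfl
      subst hmw
      have hsum := sum_wm w.toList 0 j
      rw [← hl] at hsum
      constructor
      · intro hj
        rw [hsum, if_pos (by omega)]
      · intro hj
        rw [hsum, if_neg (by omega)]
    · rw [if_neg hl] at hw
      simp at hw
end

section
/- Two-variable span equality after rank extraction: let M ∈ F[x]^{r×r} and N ∈ F[y]^{r×r} have degree < n, and let ω ∈ F have multiplicative order ≥ n². Then for every α ∈ F, span{ M(ω^ℓ α) N((ω^ℓ α)^n) : ℓ ∈ {0,…,r²-1} } ⊆ span{ coeff_{x^i y^j}(M(x)N(y)) : i, j ∈ {0,…,n-1} }, and for all but fewer than n²r² values of α ∈ F the two spans are equal. -/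
open Polynomial PowerSeries Finset Submodule Matrix

namespace TwoVarAux

variable {F : Type*} [Field F]

lemma kappa_eq {n i j i' j' : ℕ} (hi : i < n) (hi' : i' < n)
    (h : i + n * j = i' + n * j') : i = i' ∧ j = j' := by
  have hn : 0 < n := lt_of_le_of_lt (Nat.zero_le _) hi
  have hj : j = j' := by
    have h1 : (i + n * j) / n = i / n + j := Nat.add_mul_div_left i j hn
    have h2 : (i' + n * j') / n = i' / n + j' := Nat.add_mul_div_left i' j' hn
    rw [Nat.div_eq_of_lt hi] at h1
    rw [Nat.div_eq_of_lt hi'] at h2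
    rw [h] at h1
    omega
  subst hj
  exact ⟨by omega, rfl⟩


lemma pow_eq_pow_unique {ω : F} {n2 : ℕ} (hn2 : 0 < n2)
    (hω : Set.InjOn (fun k : ℕ => ω ^ k) (Set.Iio n2))
    (hω0 : ω ≠ 0) {k k' : ℕ} (h : ω ^ k = ω ^ k')
    (hd : k - k' < n2) (hd' : k' - k < n2) : k = k' := by
  rcases le_total k' k with hle | hle
  · have h1 : ω ^ k' * ω ^ (k - k') = ω ^ k' * 1 := by
      rw [mul_one, ← pow_add]
      rw [← h]
      congr 1
      omega
    have h2 : ω ^ (k - k') = 1 := mul_left_cancel₀ (pow_ne_zero _ hω0) h1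
    have h3 : (k - k') = 0 := by
      have := hω (by exact hd : (k - k') ∈ Set.Iio n2) (by exact hn2 : (0:ℕ) ∈ Set.Iio n2)
        (by simpa using h2)
      exact this
    omega
  · have h1 : ω ^ k * ω ^ (k' - k) = ω ^ k * 1 := by
      rw [mul_one, ← pow_add, h]
      congr 1
      omega
    have h2 : ω ^ (k' - k) = 1 := mul_left_cancel₀ (pow_ne_zero _ hω0) h1
    have h3 : (k' - k) = 0 := by
      exact hω (by exact hd' : (k' - k) ∈ Set.Iio n2) (by exact hn2 : (0:ℕ) ∈ Set.Iio n2)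
        (by simpa using h2)
    omega


lemma coeff_rescale_iter (ω : F) (a k : ℕ) (f : F⟦X⟧) :
    PowerSeries.coeff k ((rescale ω)^[a] f) = ω ^ (a * k) * PowerSeries.coeff k f := by
  induction a with
  | zero => simp
  | succ a ih =>
    rw [Function.iterate_succ_apply', coeff_rescale, ih, ← mul_assoc, ← pow_add]
    congr 2
    ring


lemma rescale_inj {ω : F} (hω0 : ω ≠ 0) : Function.Injective (rescale ω) := by
  intro x y h
  have := congrArg (rescale ω⁻¹) h
  rwa [rescale_rescale, rescale_rescale, mul_inv_cancel₀ hω0, rescale_one, RingHom.id_apply,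
    RingHom.id_apply] at this


lemma rescale_smul (ω c : F) (f : F⟦X⟧) : rescale ω (c • f) = c • rescale ω f := by
  ext k
  rw [coeff_rescale, PowerSeries.coeff_smul, PowerSeries.coeff_smul, coeff_rescale,
    smul_eq_mul, smul_eq_mul]
  ring


lemma block {J : Type*} [DecidableEq J] (s : Finset J) (n2 : ℕ) (hn2 : 0 < n2)
    (ω : F) (hω : Set.InjOn (fun k : ℕ => ω ^ k) (Set.Iio n2)) (hω0 : ω ≠ 0)
    (p : J → F⟦X⟧)
    (hp : ∀ j ∈ s, ∀ k, n2 ≤ k → PowerSeries.coeff k (p j) = 0)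
    (hind : ∀ f : J → F, (∑ j ∈ s, f j • p j) = 0 → ∀ j ∈ s, f j = 0)
    (m : ℕ) (q : J → F⟦X⟧)
    (hq : ∀ j ∈ s, rescale ω (q j) = PowerSeries.C (ω ^ m) * q j)
    (hrel : (∑ j ∈ s, q j * p j) = 0) :
    ∀ j ∈ s, q j = 0 := by
  intro j hj
  ext k₀
  rw [_root_.map_zero]
  have hqc : ∀ j' ∈ s, ∀ k : ℕ, ω ^ k * PowerSeries.coeff k (q j') =
      ω ^ m * PowerSeries.coeff k (q j') := by
    intro j' hj' k
    have := congrArg (PowerSeries.coeff k) (hq j' hj')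
    rwa [coeff_rescale, PowerSeries.coeff_C_mul] at this
  by_cases hcase : ω ^ k₀ = ω ^ m
  · -- coefficientwise block argument
    set g : J → F := fun j' => PowerSeries.coeff k₀ (q j') with hg
    have hterm : ∀ i : ℕ, i < n2 → ∀ j' ∈ s,
        PowerSeries.coeff (k₀ + i) (q j' * p j') = g j' * PowerSeries.coeff i (p j') := by
      intro i hi j' hj'
      rw [PowerSeries.coeff_mul]
      apply Finset.sum_eq_single (k₀, i)
      · rintro ⟨k, i'⟩ hb hne
        rw [Finset.HasAntidiagonal.mem_antidiagonal] at hb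
        by_cases hq0 : PowerSeries.coeff k (q j') = 0
        · rw [hq0, zero_mul]
        · have hωk : ω ^ k = ω ^ m := mul_right_cancel₀ hq0 (hqc j' hj' k)
          by_cases hi' : n2 ≤ i'
          · rw [hp j' hj' i' hi', mul_zero]
          · exfalso
            have hkk : k = k₀ := by
              apply pow_eq_pow_unique hn2 hω hω0 (hωk.trans hcase.symm)
              · omega
              · omega
            apply hne
            simp only [hkk] at hb ⊢
            have : i' = i := by omega
            rw [this]
      · intro hmem
        exfalso
        exact hmem (Finset.HasAntidiagonal.mem_antidiagonal.mpr rfl)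
    have hgsum : (∑ j' ∈ s, g j' • p j') = 0 := by
      ext i
      rw [_root_.map_zero, _root_.map_sum]
      by_cases hi : i < n2
      · have h0 : PowerSeries.coeff (k₀ + i) (∑ j' ∈ s, q j' * p j') = 0 := by
          rw [hrel, _root_.map_zero]
        rw [_root_.map_sum] at h0
        rw [← h0]
        apply Finset.sum_congr rfl
        intro j' hj'
        rw [PowerSeries.coeff_smul, smul_eq_mul, hterm i hi j' hj']
      · push_neg at hi
        apply Finset.sum_eq_zero
        intro j' hj'
        rw [PowerSeries.coeff_smul, smul_eq_mul, hp j' hj' i hi, mul_zero]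
    exact hind g hgsum j hj
  · have h1 := hqc j hj k₀
    have h2 : (ω ^ k₀ - ω ^ m) * PowerSeries.coeff k₀ (q j) = 0 := by
      rw [sub_mul, h1, sub_self]
    exact (mul_eq_zero.mp h2).resolve_left (sub_ne_zero.mpr hcase)


lemma indep_erase {J : Type*} [DecidableEq J] {s : Finset J} {p : J → F⟦X⟧}
    (hind : ∀ f : J → F, (∑ j ∈ s, f j • p j) = 0 → ∀ j ∈ s, f j = 0)
    (j₀ : J) (hj₀ : j₀ ∈ s) :
    ∀ f : J → F, (∑ j ∈ s.erase j₀, f j • p j) = 0 → ∀ j ∈ s.erase j₀, f j = 0 := by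
  intro f hf j hj
  set f' : J → F := fun x => if x = j₀ then 0 else f x with hf'
  have hsum : (∑ x ∈ s, f' x • p x) = 0 := by
    rw [← Finset.sum_erase_add _ _ hj₀]
    have h1 : (∑ x ∈ s.erase j₀, f' x • p x) = ∑ x ∈ s.erase j₀, f x • p x := by
      apply Finset.sum_congr rfl
      intro x hx
      have : x ≠ j₀ := Finset.ne_of_mem_erase hx
      simp [hf', this]
    rw [h1, hf]
    simp [hf']
  have := hind f' hsum j (Finset.mem_of_mem_erase hj)
  simpa [hf', Finset.ne_of_mem_erase hj] using this


lemma cas {J : Type*} [DecidableEq J] (n2 : ℕ) (hn2 : 0 < n2)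
    (ω : F) (hω : Set.InjOn (fun k : ℕ => ω ^ k) (Set.Iio n2)) (hω0 : ω ≠ 0)
    (s : Finset J) :
    ∀ p : J → F⟦X⟧,
      (∀ j ∈ s, ∀ k, n2 ≤ k → PowerSeries.coeff k (p j) = 0) →
      (∀ f : J → F, (∑ j ∈ s, f j • p j) = 0 → ∀ j ∈ s, f j = 0) →
      ∀ c : J → F⟦X⟧,
      (∀ a, a < s.card → (∑ j ∈ s, c j * (rescale ω)^[a] (p j)) = 0) →
      ∀ j ∈ s, c j = 0 := by
  induction s using Finset.strongInduction with
  | _ s IH =>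
  intro p hp hind c hrel j hj
  by_cases hzero : ∃ j₀ ∈ s, c j₀ = 0
  · obtain ⟨j₀, hj₀, hc0⟩ := hzero
    rcases eq_or_ne j j₀ with rfl | hne
    · exact hc0
    · refine IH _ (Finset.erase_ssubset hj₀) p
        (fun j' hj' k hk => hp j' (Finset.mem_of_mem_erase hj') k hk)
        (indep_erase hind j₀ hj₀) c ?_ j (Finset.mem_erase.mpr ⟨hne, hj⟩)
      intro a ha
      have ha' : a < s.card := by
        rw [Finset.card_erase_of_mem hj₀] at ha
        omega
      have h1 := hrel a ha'
      rw [← Finset.sum_erase_add _ _ hj₀, hc0, zero_mul, add_zero] at h1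
      exact h1
  · push_neg at hzero
    exfalso
    have hcj : c j ≠ 0 := hzero j hj
    set c' : J → F⟦X⟧ := fun x => rescale ω (c j) * c x - c j * rescale ω (c x) with hc'
    -- derived relations on the erased set with rescaled family
    have hrel' : ∀ a, a < (s.erase j).card →
        (∑ x ∈ s.erase j, c' x * (rescale ω)^[a] ((fun y => rescale ω (p y)) x)) = 0 := by
      intro a ha
      have ha1 : a + 1 < s.card := by
        rw [Finset.card_erase_of_mem hj] at ha
        omega
      have R1 := hrel (a + 1) ha1
      have R2 : (∑ x ∈ s, rescale ω (c x) * (rescale ω)^[a + 1] (p x)) = 0 := by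
        have h2 := congrArg (rescale ω) (hrel a (by omega))
        rw [_root_.map_sum, _root_.map_zero] at h2
        rw [← h2]
        apply Finset.sum_congr rfl
        intro x hx
        rw [_root_.map_mul, Function.iterate_succ_apply']
      have hfull : (∑ x ∈ s, c' x * (rescale ω)^[a + 1] (p x)) = 0 := by
        have : (∑ x ∈ s, c' x * (rescale ω)^[a + 1] (p x)) =
            rescale ω (c j) * (∑ x ∈ s, c x * (rescale ω)^[a + 1] (p x)) -
            c j * (∑ x ∈ s, rescale ω (c x) * (rescale ω)^[a + 1] (p x)) := by
          rw [Finset.mul_sum, Finset.mul_sum, ← Finset.sum_sub_distrib]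
          apply Finset.sum_congr rfl
          intro x hx
          rw [hc']
          ring
        rw [this, R1, R2, mul_zero, mul_zero, sub_zero]
      have hcj' : c' j = 0 := by
        rw [hc']
        simp [mul_comm]
      rw [← Finset.sum_erase_add _ _ hj, hcj', zero_mul, add_zero] at hfull
      rw [← hfull]
      apply Finset.sum_congr rfl
      intro x hx
      rw [Function.iterate_succ_apply]
    have hp' : ∀ x ∈ s.erase j, ∀ k, n2 ≤ k →
        PowerSeries.coeff k ((fun y => rescale ω (p y)) x) = 0 := by
      intro x hx k hk
      simp only [coeff_rescale]
      rw [hp x (Finset.mem_of_mem_erase hx) k hk, mul_zero]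
    have hind' : ∀ f : J → F, (∑ x ∈ s.erase j, f x • (fun y => rescale ω (p y)) x) = 0 →
        ∀ x ∈ s.erase j, f x = 0 := by
      intro f hf
      have h2 : rescale ω (∑ x ∈ s.erase j, f x • p x) = 0 := by
        rw [_root_.map_sum]
        rw [← hf]
        apply Finset.sum_congr rfl
        intro x hx
        rw [rescale_smul]
      have h3 : (∑ x ∈ s.erase j, f x • p x) = 0 := by
        apply rescale_inj hω0
        rw [h2, _root_.map_zero]
      exact indep_erase hind j hj f h3
    have hkey := IH _ (Finset.erase_ssubset hj) _ hp' hind' c' hrel'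
    have hprop : ∀ x ∈ s, rescale ω (c j) * c x = c j * rescale ω (c x) := by
      intro x hx
      rcases eq_or_ne x j with rfl | hxj
      · ring
      · have := hkey x (Finset.mem_erase.mpr ⟨hxj, hx⟩)
        rw [hc'] at this
        exact sub_eq_zero.mp this
    -- factor c j = X^t * unit
    set t : ℕ := (c j).order.lift (order_finite_iff_ne_zero.mpr hcj) with ht
    set u : F⟦X⟧ˣ := Unit_of_divided_by_X_pow_order (c j) with hu
    have hdec : (X : F⟦X⟧) ^ t * (u : F⟦X⟧) = c j := by
      rw [hu, Unit_of_divided_by_X_pow_order_nonzero hcj]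
      rw [ht, ENat.lift_eq_toNat_of_lt_top]
      exact X_pow_order_mul_divXPowOrder
    have hune : (u : F⟦X⟧) ≠ 0 := Units.ne_zero u
    have hXt : (X : F⟦X⟧) ^ t ≠ 0 := pow_ne_zero _ X_ne_zero
    have hrune : rescale ω (u : F⟦X⟧) ≠ 0 := by
      intro h
      apply hune
      apply rescale_inj hω0
      rw [h, _root_.map_zero]
    have hresX : rescale ω ((X : F⟦X⟧) ^ t) = PowerSeries.C (ω ^ t) * (X : F⟦X⟧) ^ t := by
      rw [_root_.map_pow, rescale_X, mul_pow, ← _root_.map_pow]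
    -- key: rescale of (u⁻¹ * c x)
    set q : J → F⟦X⟧ := fun x => (↑u⁻¹ : F⟦X⟧) * c x with hqdef
    have hq : ∀ x ∈ s, rescale ω (q x) = PowerSeries.C (ω ^ t) * q x := by
      intro x hx
      have heq0 := hprop x hx
      rw [← hdec] at heq0
      rw [_root_.map_mul, hresX] at heq0
      -- heq0 : C(ω^t) * X^t * rescale u * c x = X^t * u * rescale (c x)
      have heq1 : (X : F⟦X⟧) ^ t * (PowerSeries.C (ω ^ t) * rescale ω (u : F⟦X⟧) * c x) =
          (X : F⟦X⟧) ^ t * ((u : F⟦X⟧) * rescale ω (c x)) := by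
        linear_combination heq0
      have heq2 : PowerSeries.C (ω ^ t) * rescale ω (u : F⟦X⟧) * c x =
          (u : F⟦X⟧) * rescale ω (c x) := mul_left_cancel₀ hXt heq1
      have huu : (u : F⟦X⟧) * (↑u⁻¹ : F⟦X⟧) = 1 := by
        rw [← Units.val_mul, mul_inv_cancel, Units.val_one]
      have hruu : rescale ω (u : F⟦X⟧) * rescale ω (↑u⁻¹ : F⟦X⟧) = 1 := by
        rw [← _root_.map_mul, huu, _root_.map_one]
      apply mul_left_cancel₀ (mul_ne_zero hune hrune)
      rw [hqdef]
      calc (u : F⟦X⟧) * rescale ω (u : F⟦X⟧) * rescale ω ((↑u⁻¹ : F⟦X⟧) * c x)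
          = (u : F⟦X⟧) * ((rescale ω (u : F⟦X⟧) * rescale ω (↑u⁻¹ : F⟦X⟧)) * rescale ω (c x)) := by
            rw [_root_.map_mul]; ring
        _ = (u : F⟦X⟧) * rescale ω (c x) := by rw [hruu, one_mul]
        _ = PowerSeries.C (ω ^ t) * rescale ω (u : F⟦X⟧) * c x := heq2.symm
        _ = (u : F⟦X⟧) * rescale ω (u : F⟦X⟧) * (PowerSeries.C (ω ^ t) * ((↑u⁻¹ : F⟦X⟧) * c x)) := by
            calc PowerSeries.C (ω ^ t) * rescale ω (u : F⟦X⟧) * c x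
                = ((u : F⟦X⟧) * (↑u⁻¹ : F⟦X⟧)) * (PowerSeries.C (ω ^ t) * rescale ω (u : F⟦X⟧) * c x) := by
                  rw [huu, one_mul]
              _ = (u : F⟦X⟧) * rescale ω (u : F⟦X⟧) * (PowerSeries.C (ω ^ t) * ((↑u⁻¹ : F⟦X⟧) * c x)) := by
                  ring
    have hrelq : (∑ x ∈ s, q x * p x) = 0 := by
      have h0 := hrel 0 (Finset.card_pos.mpr ⟨j, hj⟩)
      simp only [Function.iterate_zero, id_eq] at h0
      have : (∑ x ∈ s, q x * p x) = (↑u⁻¹ : F⟦X⟧) * ∑ x ∈ s, c x * p x := by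
        rw [Finset.mul_sum]
        apply Finset.sum_congr rfl
        intro x hx
        rw [hqdef]
        ring
      rw [this, h0, mul_zero]
    have hq0 := block s n2 hn2 ω hω hω0 p hp hind t q hq hrelq j hj
    apply hcj
    have : (u : F⟦X⟧) * q j = c j := by
      rw [hqdef, ← mul_assoc, ← Units.val_mul, mul_inv_cancel, Units.val_one, one_mul]
    rw [← this, hq0, mul_zero]


lemma exists_subfamily {V : Type*} [AddCommGroup V] [Module F V] {J : Type*} [Fintype J]
    (g : J → V) (d : ℕ) (hd : d = Module.finrank F (span F (Set.range g))) :
    ∃ pos : Fin d → J, LinearIndependent F (fun a => g (pos a)) := by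
  obtain ⟨b, hbsub, hbspan, hbli⟩ := exists_linearIndependent F (Set.range g)
  have hbfin : b.Finite := (Set.finite_range g).subset hbsub
  haveI := hbfin.fintype
  have hcard : Fintype.card b = d := by
    rw [hd, ← hbspan, finrank_span_set_eq_card hbli, Set.toFinset_card]
  let e : Fin d ≃ b := (Fintype.equivFinOfCardEq hcard).symm
  choose φ hφ using fun x : b => hbsub x.2
  refine ⟨fun a => φ (e a), ?_⟩
  have heq : (fun a => g (φ (e a))) = fun a => ((e a : V)) := funext fun a => hφ (e a)
  rw [heq]
  exact hbli.comp e e.injective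


lemma prod_eq {r n : ℕ} (hn : 1 ≤ n) (M N : Matrix (Fin r) (Fin r) (Polynomial F))
    (hM : ∀ u v, (M u v).degree < (n : ℕ)) (hN : ∀ u v, (N u v).degree < (n : ℕ)) (β : F) :
    (M.map fun q => q.eval β) * (N.map fun q => q.eval (β ^ n)) =
    ∑ ij : Fin n × Fin n, β ^ ((ij.1 : ℕ) + n * (ij.2 : ℕ)) •
      ((M.map (Polynomial.C : Polynomial F →+* Polynomial (Polynomial F))) *
        (N.map (Polynomial.map (Polynomial.C : F →+* Polynomial F)))).map
        (fun q => (q.coeff (ij.2 : ℕ)).coeff (ij.1 : ℕ)) := by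
  have hdeg : ∀ p : Polynomial F, p.degree < (n : ℕ) → p.natDegree < n := by
    intro p hp
    rcases eq_or_ne p 0 with rfl | h0
    · rw [Polynomial.natDegree_zero]; omega
    · exact (Polynomial.natDegree_lt_iff_degree_lt h0).mpr hp
  ext u v
  -- the coefficient matrices entrywise
  have hDm : ∀ ij : Fin n × Fin n,
      (((M.map (Polynomial.C : Polynomial F →+* Polynomial (Polynomial F))) *
        (N.map (Polynomial.map (Polynomial.C : F →+* Polynomial F)))).map
        (fun q => (q.coeff (ij.2 : ℕ)).coeff (ij.1 : ℕ))) u v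
      = ∑ w, (M u w).coeff (ij.1 : ℕ) * (N w v).coeff (ij.2 : ℕ) := by
    intro ij
    rw [Matrix.map_apply, Matrix.mul_apply, Polynomial.finset_sum_coeff,
      Polynomial.finset_sum_coeff]
    apply Finset.sum_congr rfl
    intro w _
    rw [Matrix.map_apply, Matrix.map_apply, Polynomial.coeff_C_mul, Polynomial.coeff_map,
      Polynomial.coeff_mul_C]
  rw [Matrix.sum_apply]
  simp_rw [Matrix.smul_apply, hDm, smul_eq_mul]
  rw [Matrix.mul_apply]
  simp_rw [Matrix.map_apply]
  -- expand evals
  have hLHS : ∀ w, (M u w).eval β * (N w v).eval (β ^ n) =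
      ∑ i ∈ Finset.range n, ∑ jj ∈ Finset.range n,
        ((M u w).coeff i * β ^ i) * ((N w v).coeff jj * (β ^ n) ^ jj) := by
    intro w
    rw [Polynomial.eval_eq_sum_range' (hdeg _ (hM u w)),
      Polynomial.eval_eq_sum_range' (hdeg _ (hN w v)), Finset.sum_mul_sum]
  simp_rw [hLHS]
  rw [Finset.sum_comm]
  -- now goal : ∑ i ∈ range n, ∑ w, ∑ jj ... = ∑ ij : Fin n × Fin n, ...
  rw [Fintype.sum_prod_type]
  rw [← Fin.sum_univ_eq_sum_range
    (fun i => ∑ w, ∑ jj ∈ Finset.range n, ((M u w).coeff i * β ^ i) *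
      ((N w v).coeff jj * (β ^ n) ^ jj)) n]
  apply Finset.sum_congr rfl
  intro i _
  rw [Finset.sum_comm]
  rw [← Fin.sum_univ_eq_sum_range
    (fun jj => ∑ w, ((M u w).coeff (i : ℕ) * β ^ (i : ℕ)) *
      ((N w v).coeff jj * (β ^ n) ^ jj)) n]
  apply Finset.sum_congr rfl
  intro jj _
  rw [Finset.mul_sum]
  apply Finset.sum_congr rfl
  intro w _
  rw [← pow_mul, pow_add]
  ring


lemma abstract_main (r n : ℕ) (hr : 1 ≤ r) (hn : 1 ≤ n) (ω : F)
    (hω : Set.InjOn (fun k : ℕ => ω ^ k) (Set.Iio (n ^ 2))) (hω0 : ω ≠ 0)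
    (D : Fin n × Fin n → Matrix (Fin r) (Fin r) F) :
    (∀ α : F, span F (Set.range fun ℓ : Fin (r ^ 2) =>
        ∑ ij : Fin n × Fin n, ((ω ^ (ℓ : ℕ) * α) ^ ((ij.1 : ℕ) + n * (ij.2 : ℕ))) • D ij) ≤
      span F (Set.range D)) ∧
    ∃ B : Finset F, B.card < n ^ 2 * r ^ 2 ∧ ∀ α ∉ B,
      span F (Set.range fun ℓ : Fin (r ^ 2) =>
        ∑ ij : Fin n × Fin n, ((ω ^ (ℓ : ℕ) * α) ^ ((ij.1 : ℕ) + n * (ij.2 : ℕ))) • D ij) =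
      span F (Set.range D) := by
  classical
  have hn2 : 0 < n ^ 2 := by positivity
  set κf : Fin n × Fin n → ℕ := fun ij => (ij.1 : ℕ) + n * (ij.2 : ℕ) with hκ
  have hκlt : ∀ ij, κf ij < n ^ 2 := by
    intro ij
    have h1 : (ij.1 : ℕ) < n := ij.1.isLt
    have h2 : (ij.2 : ℕ) + 1 ≤ n := ij.2.isLt
    have h3 : n * ((ij.2 : ℕ) + 1) ≤ n * n := Nat.mul_le_mul_left n h2
    have hms : n * ((ij.2 : ℕ) + 1) = n * (ij.2 : ℕ) + n := Nat.mul_succ n _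
    have h5 : n * n = n ^ 2 := (sq n).symm
    simp only [hκ]
    omega
  have hκinj : Function.Injective κf := by
    intro ij ij' h
    obtain ⟨h1, h2⟩ := kappa_eq ij.1.isLt ij'.1.isLt h
    exact Prod.ext (Fin.ext h1) (Fin.ext h2)
  set V := span F (Set.range D) with hV
  have hmem : ∀ (α : F) (ℓ : Fin (r ^ 2)),
      (∑ ij : Fin n × Fin n, ((ω ^ (ℓ : ℕ) * α) ^ κf ij) • D ij) ∈ V := by
    intro α ℓ
    exact Submodule.sum_mem _ fun ij _ => Submodule.smul_mem _ _ (subset_span ⟨ij, rfl⟩)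
  have part1 : ∀ α : F, span F (Set.range fun ℓ : Fin (r ^ 2) =>
      ∑ ij : Fin n × Fin n, ((ω ^ (ℓ : ℕ) * α) ^ κf ij) • D ij) ≤ V := by
    intro α
    rw [span_le]
    rintro x ⟨ℓ, rfl⟩
    exact hmem α ℓ
  refine ⟨part1, ?_⟩
  set mcur : Matrix (Fin r) (Fin r) F ≃ₗ[F] (Fin r × Fin r → F) :=
    { toFun := fun A uv => A uv.1 uv.2
      invFun := fun g => Matrix.of fun u v' => g (u, v')
      map_add' := fun _ _ => rfl
      map_smul' := fun _ _ => rfl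
      left_inv := fun _ => rfl
      right_inv := fun _ => rfl } with hmcur
  set Mat : Matrix (Fin n × Fin n) (Fin r × Fin r) F := fun ij uv => D ij uv.1 uv.2 with hMat
  set d := Module.finrank F ↥V with hd
  have hdr : d ≤ r ^ 2 := by
    have h1 := V.finrank_le
    have h2 : Module.finrank F (Matrix (Fin r) (Fin r) F) = r ^ 2 := by
      rw [Module.finrank_matrix]
      simp [Fintype.card_fin, sq]
    rw [h2] at h1
    exact h1
  have hrank : Module.finrank F (span F (Set.range Matᵀ)) = d := by
    have hc := Matrix.rank_eq_finrank_span_cols Mat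
    rw [Matrix.rank_eq_finrank_span_row] at hc
    change Module.finrank F (span F (Set.range Mat.col)) = d
    rw [← hc]
    change Module.finrank F (span F (Set.range Mat)) = d
    have hspan : Submodule.map (mcur : Matrix (Fin r) (Fin r) F →ₗ[F] (Fin r × Fin r → F)) V
        = span F (Set.range Mat) := by
      rw [hV, Submodule.map_span]
      congr 1
      rw [← Set.range_comp]
      rfl
    rw [← hspan, LinearEquiv.finrank_map_eq]
  obtain ⟨pos, hpos⟩ := exists_subfamily (F := F) Matᵀ d hrank.symm
  set p : Fin d → F⟦X⟧ :=
    fun b => ∑ ij : Fin n × Fin n, PowerSeries.monomial (κf ij) (Matᵀ (pos b) ij) with hp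
  have hpcoeff : ∀ (b : Fin d) (ij : Fin n × Fin n),
      PowerSeries.coeff (κf ij) (p b) = Matᵀ (pos b) ij := by
    intro b ij
    simp only [hp]
    rw [_root_.map_sum, Finset.sum_eq_single ij]
    · rw [PowerSeries.coeff_monomial, if_pos rfl]
    · intro ij' _ hne
      rw [PowerSeries.coeff_monomial, if_neg]
      intro h'
      exact hne ((hκinj h').symm)
    · intro h
      exact absurd (Finset.mem_univ ij) h
  have hpbig : ∀ (b : Fin d) (k : ℕ), n ^ 2 ≤ k → PowerSeries.coeff k (p b) = 0 := by
    intro b k hk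
    simp only [hp]
    rw [_root_.map_sum]
    apply Finset.sum_eq_zero
    intro ij _
    rw [PowerSeries.coeff_monomial, if_neg]
    intro h
    have := hκlt ij
    omega
  have hindp : ∀ f : Fin d → F, (∑ b ∈ Finset.univ, f b • p b) = 0 → ∀ b ∈ Finset.univ, f b = 0 := by
    intro f hf b _
    have h2 : (∑ b, f b • Matᵀ (pos b)) = 0 := by
      funext ij
      have hcoeff := congrArg (PowerSeries.coeff (κf ij)) hf
      rw [_root_.map_zero, _root_.map_sum] at hcoeff
      calc (∑ b, f b • Matᵀ (pos b)) ij = ∑ b, f b * Matᵀ (pos b) ij := by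
            rw [Finset.sum_apply]
            apply Finset.sum_congr rfl
            intro b _
            rw [Pi.smul_apply, smul_eq_mul]
        _ = ∑ b, PowerSeries.coeff (κf ij) (f b • p b) := by
            apply Finset.sum_congr rfl
            intro b _
            rw [PowerSeries.coeff_smul, hpcoeff, smul_eq_mul]
        _ = 0 := hcoeff
    exact Fintype.linearIndependent_iff.mp hpos f h2 b
  set Gmat : Matrix (Fin d) (Fin d) (Polynomial F) := fun a b =>
    ∑ ij : Fin n × Fin n,
      Polynomial.monomial (κf ij) (ω ^ ((a : ℕ) * κf ij) * Matᵀ (pos b) ij) with hGmat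
  set G : Polynomial F := Gmat.det with hG
  have hGPS : ∀ a b : Fin d, Polynomial.coeToPowerSeries.ringHom (Gmat a b)
      = (rescale ω)^[(a : ℕ)] (p b) := by
    intro a b
    ext k
    rw [Polynomial.coeToPowerSeries.ringHom_apply, Polynomial.coeff_coe, coeff_rescale_iter]
    have hL : Polynomial.coeff (Gmat a b) k = ∑ ij : Fin n × Fin n,
        (if κf ij = k then ω ^ ((a : ℕ) * κf ij) * Matᵀ (pos b) ij else 0) := by
      simp only [hGmat]
      rw [Polynomial.finset_sum_coeff]
      apply Finset.sum_congr rfl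
      intro ij _
      rw [Polynomial.coeff_monomial]
    have hR : PowerSeries.coeff k (p b) = ∑ ij : Fin n × Fin n,
        (if κf ij = k then Matᵀ (pos b) ij else 0) := by
      simp only [hp]
      rw [_root_.map_sum]
      apply Finset.sum_congr rfl
      intro ij _
      rw [PowerSeries.coeff_monomial]
      simp only [eq_comm]
    rw [hL, hR, Finset.mul_sum]
    apply Finset.sum_congr rfl
    intro ij _
    split_ifs with h
    · rw [h]
    · rw [mul_zero]
  have hGne : G ≠ 0 := by
    intro h0
    have hdet0 : (Gmat.map (Polynomial.coeToPowerSeries.ringHom : Polynomial F →+* F⟦X⟧)).det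
        = 0 := by
      have h1 := (Polynomial.coeToPowerSeries.ringHom : Polynomial F →+* F⟦X⟧).map_det Gmat
      rw [RingHom.mapMatrix_apply] at h1
      rw [← h1, ← hG, h0, _root_.map_zero]
    obtain ⟨c, hc0, hck⟩ := Matrix.exists_mulVec_eq_zero_iff.mpr hdet0
    have hrels : ∀ a, a < (Finset.univ : Finset (Fin d)).card →
        (∑ b ∈ Finset.univ, c b * (rescale ω)^[a] (p b)) = 0 := by
      intro a ha
      rw [Finset.card_univ, Fintype.card_fin] at ha
      have h1 := congrFun hck ⟨a, ha⟩
      have h2 : (∑ b, Polynomial.coeToPowerSeries.ringHom (Gmat ⟨a, ha⟩ b) * c b) = 0 := by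
        simpa [Matrix.mulVec, dotProduct, Matrix.map_apply] using h1
      rw [← h2]
      apply Finset.sum_congr rfl
      intro b _
      have h3 := hGPS ⟨a, ha⟩ b
      rw [h3]
      exact mul_comm _ _
    have hc := cas (n ^ 2) hn2 ω hω hω0 Finset.univ p
      (fun b _ k hk => hpbig b k hk) (fun f hf => hindp f hf) c hrels
    exact hc0 (funext fun b => hc b (Finset.mem_univ b))
  have hGdeg : G.natDegree ≤ d * (n ^ 2 - 1) := by
    rw [hG, Matrix.det_apply]
    apply Polynomial.natDegree_sum_le_of_forall_le
    intro σ _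
    have hsmul : Polynomial.natDegree (Equiv.Perm.sign σ • ∏ i, Gmat (σ i) i)
        ≤ Polynomial.natDegree (∏ i, Gmat (σ i) i) := by
      rcases Int.units_eq_one_or (Equiv.Perm.sign σ) with h | h <;> rw [h] <;>
        simp [Units.neg_smul, Polynomial.natDegree_neg]
    refine hsmul.trans ?_
    refine (Polynomial.natDegree_prod_le _ _).trans ?_
    have hent : ∀ i : Fin d, (Gmat (σ i) i).natDegree ≤ n ^ 2 - 1 := by
      intro i
      simp only [hGmat]
      apply Polynomial.natDegree_sum_le_of_forall_le
      intro ij _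
      refine (Polynomial.natDegree_monomial_le _).trans ?_
      have := hκlt ij
      omega
    calc ∑ i, (Gmat (σ i) i).natDegree ≤ ∑ _i : Fin d, (n ^ 2 - 1) :=
          Finset.sum_le_sum fun i _ => hent i
      _ = d * (n ^ 2 - 1) := by
          rw [Finset.sum_const, Finset.card_univ, Fintype.card_fin, smul_eq_mul]
  refine ⟨G.roots.toFinset, ?_, ?_⟩
  · have h1 : G.roots.toFinset.card ≤ Multiset.card G.roots := Multiset.toFinset_card_le _
    have h2 : Multiset.card G.roots ≤ G.natDegree := Polynomial.card_roots' G
    have h3 : d * (n ^ 2 - 1) ≤ r ^ 2 * (n ^ 2 - 1) := Nat.mul_le_mul_right _ hdr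
    have h4 : r ^ 2 * (n ^ 2 - 1) < n ^ 2 * r ^ 2 := by
      have hr2 : 0 < r ^ 2 := by positivity
      have h5 : n ^ 2 - 1 < n ^ 2 := Nat.sub_lt hn2 one_pos
      calc r ^ 2 * (n ^ 2 - 1) < r ^ 2 * n ^ 2 := by
            exact mul_lt_mul_of_pos_left h5 hr2
        _ = n ^ 2 * r ^ 2 := Nat.mul_comm _ _
    omega
  · intro α hα
    have hGα : Polynomial.eval α G ≠ 0 := by
      intro h
      apply hα
      rw [Multiset.mem_toFinset, Polynomial.mem_roots hGne]
      exact h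
    have hdetα : (Gmat.map (Polynomial.evalRingHom α)).det ≠ 0 := by
      have h1 := (Polynomial.evalRingHom α).map_det Gmat
      rw [RingHom.mapMatrix_apply] at h1
      rw [← h1]
      simpa using hGα
    set emb : Fin d → Fin (r ^ 2) := fun a => ⟨(a : ℕ), lt_of_lt_of_le a.isLt hdr⟩ with hemb
    set w : Fin d → Matrix (Fin r) (Fin r) F :=
      fun a => ∑ ij : Fin n × Fin n, ((ω ^ ((a : ℕ)) * α) ^ κf ij) • D ij with hw
    have hwE : ∀ a b : Fin d, w a (pos b).1 (pos b).2 = Polynomial.eval α (Gmat a b) := by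
      intro a b
      have hL : w a (pos b).1 (pos b).2
          = ∑ ij : Fin n × Fin n, ((ω ^ (a : ℕ) * α) ^ κf ij) * Matᵀ (pos b) ij := by
        simp only [hw]
        rw [Matrix.sum_apply]
        apply Finset.sum_congr rfl
        intro ij _
        rw [Matrix.smul_apply, smul_eq_mul]
        rfl
      rw [hL]
      simp only [hGmat]
      rw [Polynomial.eval_finset_sum]
      apply Finset.sum_congr rfl
      intro ij _
      rw [Polynomial.eval_monomial, mul_pow, ← pow_mul]
      ring
    have hli : LinearIndependent F w := by
      rw [Fintype.linearIndependent_iff]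
      intro g hg
      by_contra hgn
      push_neg at hgn
      obtain ⟨i0, hi0⟩ := hgn
      have hgne : g ≠ 0 := fun h => hi0 (congrFun h i0)
      have hker : (Gmat.map (Polynomial.evalRingHom α))ᵀ.mulVec g = 0 := by
        funext b
        have h1 := congrArg (fun Mx : Matrix (Fin r) (Fin r) F => Mx (pos b).1 (pos b).2) hg
        have h2 : (∑ a, g a • w a) (pos b).1 (pos b).2 = 0 := by
          rw [h1]
          rfl
        rw [Matrix.sum_apply] at h2
        have h3 : (∑ a, g a * Polynomial.eval α (Gmat a b)) = 0 := by
          rw [← h2]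
          apply Finset.sum_congr rfl
          intro a _
          rw [Matrix.smul_apply, smul_eq_mul, hwE]
        simp only [Matrix.mulVec, dotProduct, Matrix.transpose_apply, Matrix.map_apply,
          Pi.zero_apply]
        rw [← h3]
        apply Finset.sum_congr rfl
        intro a _
        exact mul_comm _ _
      have hdet0 : (Gmat.map (Polynomial.evalRingHom α))ᵀ.det = 0 :=
        Matrix.exists_mulVec_eq_zero_iff.mp ⟨g, hgne, hker⟩
      rw [Matrix.det_transpose] at hdet0
      exact hdetα hdet0
    apply le_antisymm (part1 α)
    set vv : Fin d → ↥V := fun a => ⟨w a, hmem α (emb a)⟩ with hvv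
    have hlivv : LinearIndependent F vv := by
      apply LinearIndependent.of_comp V.subtype
      exact hli
    have hspanvv : span F (Set.range vv) = ⊤ := by
      apply hlivv.span_eq_top_of_card_eq_finrank'
      rw [Fintype.card_fin]
    have hVeq : V = span F (Set.range w) := by
      have h4 : Submodule.map V.subtype (span F (Set.range vv)) = span F (Set.range w) := by
        rw [Submodule.map_span, ← Set.range_comp]
        rfl
      rw [hspanvv, Submodule.map_top, Submodule.range_subtype] at h4
      exact h4
    refine le_trans (le_of_eq hVeq) (span_mono ?_)
    rintro x ⟨a, rfl⟩
    exact ⟨emb a, rfl⟩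


end TwoVarAux

/-- Two-variable span equality after rank extraction: for M ∈ F[x]^{r×r}, N ∈ F[y]^{r×r}
of degree < n and ω of multiplicative order ≥ n², for every α the span of
{M(ω^ℓα)N((ω^ℓα)^n) : ℓ < r²} is contained in the span of the coefficient matrices
{coeff_{x^i y^j}(M(x)N(y)) : i,j < n}, and for all but fewer than n²r² values of α the two
spans are equal.  Here M(x)N(y) is viewed as a matrix over F[x][y] (x the inner variable,
y the outer one). -/
theorem two_var_span_eq_after_extraction {F : Type*} [Field F]
    (r n : ℕ) (hr : 1 ≤ r) (hn : 1 ≤ n)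
    (M N : Matrix (Fin r) (Fin r) (Polynomial F))
    (hM : ∀ u v, (M u v).degree < (n : ℕ)) (hN : ∀ u v, (N u v).degree < (n : ℕ))
    (ω : F) (hω : Set.InjOn (fun k : ℕ => ω ^ k) (Set.Iio (n ^ 2))) :
    (∀ α : F,
      Submodule.span F (Set.range fun ℓ : Fin (r ^ 2) =>
          (M.map fun q => q.eval (ω ^ (ℓ : ℕ) * α)) *
          (N.map fun q => q.eval ((ω ^ (ℓ : ℕ) * α) ^ n))) ≤
      Submodule.span F (Set.range fun ij : Fin n × Fin n =>
          ((M.map (Polynomial.C : Polynomial F →+* Polynomial (Polynomial F))) *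
            (N.map (Polynomial.map (Polynomial.C : F →+* Polynomial F)))).map
            fun q => (q.coeff (ij.2 : ℕ)).coeff (ij.1 : ℕ))) ∧
    ∃ B : Finset F, B.card < n ^ 2 * r ^ 2 ∧ ∀ α ∉ B,
      Submodule.span F (Set.range fun ℓ : Fin (r ^ 2) =>
          (M.map fun q => q.eval (ω ^ (ℓ : ℕ) * α)) *
          (N.map fun q => q.eval ((ω ^ (ℓ : ℕ) * α) ^ n))) =
      Submodule.span F (Set.range fun ij : Fin n × Fin n =>
          ((M.map (Polynomial.C : Polynomial F →+* Polynomial (Polynomial F))) *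
            (N.map (Polynomial.map (Polynomial.C : F →+* Polynomial F)))).map
            fun q => (q.coeff (ij.2 : ℕ)).coeff (ij.1 : ℕ)) := by
  set D : Fin n × Fin n → Matrix (Fin r) (Fin r) F := fun ij =>
    ((M.map (Polynomial.C : Polynomial F →+* Polynomial (Polynomial F))) *
      (N.map (Polynomial.map (Polynomial.C : F →+* Polynomial F)))).map
      fun q => (q.coeff (ij.2 : ℕ)).coeff (ij.1 : ℕ) with hD
  by_cases hw0 : ω = 0
  · -- then n = 1
    have hn1 : n = 1 := by
      by_contra hne
      have h2 : 2 ≤ n := by omega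
      have h4 : (1 : ℕ) < n ^ 2 := by nlinarith
      have h4' : (2 : ℕ) < n ^ 2 := by nlinarith
      have h5 : ω ^ (1 : ℕ) = ω ^ (2 : ℕ) := by
        rw [hw0]
        norm_num
      have := hω (Set.mem_Iio.mpr h4) (Set.mem_Iio.mpr h4') h5
      omega
    subst hn1
    have hr2 : 0 < r ^ 2 := by positivity
    have hconst : ∀ β : F,
        (M.map fun q => q.eval β) * (N.map fun q => q.eval (β ^ 1)) = D (0, 0) := by
      intro β
      rw [TwoVarAux.prod_eq (le_refl 1) M N hM hN β]
      rw [Fintype.sum_prod_type]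
      simp only [Fin.sum_univ_one, Fin.val_zero, Nat.mul_zero, Nat.add_zero, pow_zero, one_smul]
      rfl
    have key : ∀ α : F,
        Submodule.span F (Set.range fun ℓ : Fin (r ^ 2) =>
          (M.map fun q => q.eval (ω ^ (ℓ : ℕ) * α)) *
          (N.map fun q => q.eval ((ω ^ (ℓ : ℕ) * α) ^ 1))) =
        Submodule.span F (Set.range D) := by
      intro α
      apply le_antisymm
      · rw [span_le]
        rintro x ⟨ℓ, rfl⟩
        dsimp only
        rw [hconst]
        exact subset_span ⟨(0, 0), rfl⟩
      · rw [span_le]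
        rintro x ⟨ij, rfl⟩
        have hij : ij = (0, 0) := Subsingleton.elim _ _
        refine subset_span ⟨⟨0, hr2⟩, ?_⟩
        dsimp only
        rw [hconst, hij]
    exact ⟨fun α => le_of_eq (key α), ∅, by simpa using hr2, fun α _ => key α⟩
  · obtain ⟨p1, p2⟩ := TwoVarAux.abstract_main r n hr hn ω hω hw0 D
    have hvfun : ∀ α : F, (fun ℓ : Fin (r ^ 2) =>
        (M.map fun q => q.eval (ω ^ (ℓ : ℕ) * α)) *
        (N.map fun q => q.eval ((ω ^ (ℓ : ℕ) * α) ^ n))) =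
        fun ℓ : Fin (r ^ 2) => ∑ ij : Fin n × Fin n,
          ((ω ^ (ℓ : ℕ) * α) ^ ((ij.1 : ℕ) + n * (ij.2 : ℕ))) • D ij := by
      intro α
      funext ℓ
      exact TwoVarAux.prod_eq hn M N hM hN (ω ^ (ℓ : ℕ) * α)
    constructor
    · intro α
      rw [hvfun α]
      exact p1 α
    · obtain ⟨B, hB1, hB2⟩ := p2
      refine ⟨B, hB1, fun α hα => ?_⟩
      rw [hvfun α]
      exact hB2 α hα
end
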